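/- Let 𝒜 ⊆ P(ℕ) be an almost disjoint family. The Isbell–Mrówka space Ψ(𝒜) is star-Hurewicz if and only if: for every function A ↦ f_A from 𝒜 to ℕ^ℕ, there exist finite sets ℱ₁, ℱ₂, … ⊆ 𝒜 such that for every A ∈ 𝒜, (A \ f_A(n)) ∩ ⋃_{B∈ℱ_n}(B \ f_B(n)) ≠ ∅ for all but finitely many n. -/
import Mathlib


open Set Filter

universe u

/-- Least cardinality of a cofinal subset of a preorder. -/
noncomputable def poCof (α : Type u) [Preorder α] : Cardinal.{u} :=
  sInf { c | ∃ S : Set α, (∀ a : α, ∃ b ∈ S, a ≤ b) ∧ Cardinal.mk S = c }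

/-- `cof([X]^ℵ₀)`: cofinality of the family of countably infinite subsets of `X`,
ordered by inclusion. -/
noncomputable def ctblCof (X : Type u) : Cardinal.{u} :=
  poCof { A : Set X // A.Countable ∧ A.Infinite }

/-- The dominating number 𝔡. -/
noncomputable def dNum : Cardinal :=
  sInf { c | ∃ D : Set (ℕ → ℕ),
    (∀ f : ℕ → ℕ, ∃ g ∈ D, ∀ᶠ n in atTop, f n ≤ g n) ∧ Cardinal.mk D = c }

/-- The unbounding number 𝔟. -/
noncomputable def bNum : Cardinal :=
  sInf { c | ∃ B : Set (ℕ → ℕ),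
    (∀ g : ℕ → ℕ, ∃ f ∈ B, ¬ ∀ᶠ n in atTop, f n ≤ g n) ∧ Cardinal.mk B = c }

/-- An almost disjoint family on ℕ. -/
def AlmostDisjoint (𝒜 : Set (Set ℕ)) : Prop :=
  (∀ A ∈ 𝒜, A.Infinite) ∧ ∀ A ∈ 𝒜, ∀ B ∈ 𝒜, A ≠ B → (A ∩ B).Finite

/-- The underlying set of the Isbell–Mrówka space `Ψ(𝒜) = ℕ ∪ 𝒜`. -/
abbrev PsiSpace (𝒜 : Set (Set ℕ)) : Type := ℕ ⊕ ↥𝒜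

/-- The Isbell–Mrówka topology: naturals are isolated, and basic neighborhoods
of `A ∈ 𝒜` are `{A} ∪ (A \ F)` for finite `F`. -/
instance psiTop (𝒜 : Set (Set ℕ)) : TopologicalSpace (PsiSpace 𝒜) where
  IsOpen U := ∀ A : 𝒜, Sum.inr A ∈ U → { n : ℕ | n ∈ (A : Set ℕ) ∧ Sum.inl n ∉ U }.Finite
  isOpen_univ := by
    intro A _
    convert Set.finite_empty using 1
    ext n; simp
  isOpen_inter := by
    intro U V hU hV A hA
    apply ((hU A hA.1).union (hV A hA.2)).subset
    rintro n ⟨h1, h2⟩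
    by_cases h : Sum.inl n ∈ U
    · exact Or.inr ⟨h1, fun hv => h2 ⟨h, hv⟩⟩
    · exact Or.inl ⟨h1, h⟩
  isOpen_sUnion := by
    intro s hs A hA
    obtain ⟨t, ht, hAt⟩ := hA
    apply (hs t ht A hAt).subset
    rintro n ⟨h1, h2⟩
    exact ⟨h1, fun h => h2 ⟨t, ht, h⟩⟩

/-- `st(S, 𝒰) = ⋃ {U ∈ 𝒰 : U ∩ S ≠ ∅}`. -/
def starSet {X : Type*} (S : Set X) (𝒰 : Set (Set X)) : Set X :=
  ⋃₀ { U ∈ 𝒰 | (U ∩ S).Nonempty }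

def StarMenger (X : Type*) [TopologicalSpace X] : Prop :=
  ∀ 𝒰 : ℕ → Set (Set X), (∀ n, ∀ U ∈ 𝒰 n, IsOpen U) → (∀ n, ⋃₀ 𝒰 n = univ) →
    ∃ ℱ : ℕ → Set (Set X), (∀ n, ℱ n ⊆ 𝒰 n ∧ (ℱ n).Finite) ∧
      (⋃ n, starSet (⋃₀ ℱ n) (𝒰 n)) = univ

def StarHurewicz (X : Type*) [TopologicalSpace X] : Prop :=
  ∀ 𝒰 : ℕ → Set (Set X), (∀ n, ∀ U ∈ 𝒰 n, IsOpen U) → (∀ n, ⋃₀ 𝒰 n = univ) →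
    ∃ ℱ : ℕ → Set (Set X), (∀ n, ℱ n ⊆ 𝒰 n ∧ (ℱ n).Finite) ∧
      ∀ x : X, ∀ᶠ n in atTop, x ∈ starSet (⋃₀ ℱ n) (𝒰 n)

def StarRothberger (X : Type*) [TopologicalSpace X] : Prop :=
  ∀ 𝒰 : ℕ → Set (Set X), (∀ n, ∀ U ∈ 𝒰 n, IsOpen U) → (∀ n, ⋃₀ 𝒰 n = univ) →
    ∃ U : ℕ → Set X, (∀ n, U n ∈ 𝒰 n) ∧ (⋃ n, starSet (U n) (𝒰 n)) = univ

def StronglyStarMenger (X : Type*) [TopologicalSpace X] : Prop :=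
  ∀ 𝒰 : ℕ → Set (Set X), (∀ n, ∀ U ∈ 𝒰 n, IsOpen U) → (∀ n, ⋃₀ 𝒰 n = univ) →
    ∃ F : ℕ → Set X, (∀ n, (F n).Finite) ∧ (⋃ n, starSet (F n) (𝒰 n)) = univ

def StronglyStarHurewicz (X : Type*) [TopologicalSpace X] : Prop :=
  ∀ 𝒰 : ℕ → Set (Set X), (∀ n, ∀ U ∈ 𝒰 n, IsOpen U) → (∀ n, ⋃₀ 𝒰 n = univ) →
    ∃ F : ℕ → Set X, (∀ n, (F n).Finite) ∧
      ∀ x : X, ∀ᶠ n in atTop, x ∈ starSet (F n) (𝒰 n)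

/-- combinatorial characterization of star-Hurewicz Ψ-spaces. -/
theorem starHurewicz_psiSpace_iff (𝒜 : Set (Set ℕ)) (had : AlmostDisjoint 𝒜) :
    StarHurewicz (PsiSpace 𝒜) ↔
      ∀ f : 𝒜 → ℕ → ℕ, ∃ ℱ : ℕ → Finset 𝒜, ∀ A : 𝒜,
        ∀ᶠ n in atTop,
          (((A : Set ℕ) \ Set.Iio (f A n)) ∩
            ⋃ B ∈ ℱ n, ((B : Set ℕ) \ Set.Iio (f B n))).Nonempty := by
  constructor
  · -- forward direction
    intro hSH f
    by_cases hne : Nonempty 𝒜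
    swap
    · exact ⟨fun _ => ∅, fun A => (hne ⟨A⟩).elim⟩
    obtain ⟨A₀⟩ := hne
    -- basic neighborhoods
    set Ub : 𝒜 → ℕ → Set (PsiSpace 𝒜) := fun B n =>
      {x | x = Sum.inr B ∨ ∃ k, x = Sum.inl k ∧ k ∈ (B : Set ℕ) ∧ f B n ≤ k} with hUb
    set 𝒰 : ℕ → Set (Set (PsiSpace 𝒜)) := fun n =>
      {U | (∃ k, U = {Sum.inl k}) ∨ ∃ B : 𝒜, U = Ub B n} with h𝒰
    have hUbB : ∀ (B : 𝒜) (n : ℕ), (Sum.inr B : PsiSpace 𝒜) ∈ Ub B n := by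
      intro B n; exact Or.inl rfl
    have hUbinr : ∀ (A B : 𝒜) (n : ℕ), (Sum.inr A : PsiSpace 𝒜) ∈ Ub B n → A = B := by
      intro A B n h
      rcases h with h | ⟨k, hk, _⟩
      · exact Sum.inr_injective h
      · exact absurd hk (by simp)
    have hUbinl : ∀ (B : 𝒜) (n k : ℕ),
        (Sum.inl k : PsiSpace 𝒜) ∈ Ub B n ↔ k ∈ (B : Set ℕ) ∧ f B n ≤ k := by
      intro B n k
      constructor
      · rintro (h | ⟨m, hm, h1, h2⟩)
        · exact absurd h (by simp)
        · obtain rfl : k = m := Sum.inl_injective hm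
          exact ⟨h1, h2⟩
      · intro h; exact Or.inr ⟨k, rfl, h⟩
    have hopen : ∀ n, ∀ U ∈ 𝒰 n, IsOpen U := by
      intro n U hU
      rcases hU with ⟨k, rfl⟩ | ⟨B, rfl⟩
      · intro A hA; exact absurd hA (by simp)
      · intro A hA
        obtain rfl := hUbinr A B n hA
        apply (Set.finite_Iio (f A n)).subset
        rintro m ⟨hm1, hm2⟩
        by_contra h
        exact hm2 ((hUbinl A n m).2 ⟨hm1, not_lt.1 h⟩)
    have hcov : ∀ n, ⋃₀ 𝒰 n = univ := by
      intro n
      apply eq_univ_of_forall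
      rintro (k | A)
      · exact ⟨{Sum.inl k}, Or.inl ⟨k, rfl⟩, rfl⟩
      · exact ⟨Ub A n, Or.inr ⟨A, rfl⟩, hUbB A n⟩
    obtain ⟨ℱ', hsub, hstar⟩ := hSH 𝒰 hopen hcov
    -- extract the finite families
    have hTfin : ∀ n, {B : 𝒜 | Ub B n ∈ ℱ' n}.Finite := by
      intro n
      apply Set.Finite.of_finite_image (f := fun B => Ub B n)
      · exact (hsub n).2.subset (by rintro _ ⟨B, hB, rfl⟩; exact hB)
      · intro B hB C hC h
        have h' : Ub B n = Ub C n := h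
        exact hUbinr B C n (h' ▸ hUbB B n)
    have hKfin : ∀ n, {k : ℕ | ({Sum.inl k} : Set (PsiSpace 𝒜)) ∈ ℱ' n}.Finite := by
      intro n
      apply Set.Finite.of_finite_image (f := fun k => ({Sum.inl k} : Set (PsiSpace 𝒜)))
      · exact (hsub n).2.subset (by rintro _ ⟨k, hk, rfl⟩; exact hk)
      · intro k hk m hm h
        have h' : ({Sum.inl k} : Set (PsiSpace 𝒜)) = {Sum.inl m} := h
        have : (Sum.inl k : PsiSpace 𝒜) ∈ ({Sum.inl m} : Set (PsiSpace 𝒜)) := h' ▸ rfl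
        exact Sum.inl_injective this
    classical
    set pick : ℕ → ℕ → 𝒜 := fun n k =>
      if h : ∃ B : 𝒜, k ∈ (B : Set ℕ) ∧ f B n ≤ k then h.choose else A₀ with hpick
    set G : ℕ → Set 𝒜 := fun n =>
      {B : 𝒜 | Ub B n ∈ ℱ' n} ∪ pick n '' {k | ({Sum.inl k} : Set (PsiSpace 𝒜)) ∈ ℱ' n}
      with hG
    have hGfin : ∀ n, (G n).Finite := fun n => (hTfin n).union ((hKfin n).image _)
    refine ⟨fun n => (hGfin n).toFinset, fun A => ?_⟩
    refine (hstar (Sum.inr A)).mono fun n hn => ?_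
    obtain ⟨U, ⟨hU𝒰, hUne⟩, hAU⟩ := hn
    rcases hU𝒰 with ⟨k, rfl⟩ | ⟨B, rfl⟩
    · exact absurd hAU (by simp)
    obtain rfl := hUbinr A B n hAU
    obtain ⟨x, hxU, hxℱ⟩ := hUne
    obtain ⟨F, hF, hxF⟩ := hxℱ
    have hF𝒰 : F ∈ 𝒰 n := (hsub n).1 hF
    have key : ∃ C : 𝒜, C ∈ G n ∧
        (((A : Set ℕ) \ Set.Iio (f A n)) ∩ ((C : Set ℕ) \ Set.Iio (f C n))).Nonempty := by
      rcases hxU with rfl | ⟨k, rfl, hk1, hk2⟩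
      · -- x = inr A; then F = Ub A n and A ∈ G n
        rcases hF𝒰 with ⟨k, rfl⟩ | ⟨C, rfl⟩
        · exact absurd hxF (by simp)
        obtain rfl := hUbinr A C n hxF
        refine ⟨A, Or.inl hF, ?_⟩
        obtain ⟨m, hm⟩ := ((had.1 A A.2).diff (Set.finite_Iio (f A n))).nonempty
        exact ⟨m, hm, hm⟩
      · -- x = inl k with k ∈ A \ f A n
        have hkA : k ∈ (A : Set ℕ) \ Set.Iio (f A n) := ⟨hk1, not_lt.2 hk2⟩
        rcases hF𝒰 with ⟨m, rfl⟩ | ⟨C, rfl⟩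
        · obtain rfl : k = m := Sum.inl_injective hxF
          have hex : ∃ B : 𝒜, k ∈ (B : Set ℕ) ∧ f B n ≤ k := ⟨A, hk1, hk2⟩
          refine ⟨pick n k, Or.inr ⟨k, hF, rfl⟩, k, hkA, ?_⟩
          have hp : pick n k = hex.choose := dif_pos hex
          rw [hp]
          exact ⟨hex.choose_spec.1, not_lt.2 hex.choose_spec.2⟩
        · have := (hUbinl C n k).1 hxF
          exact ⟨C, Or.inl hF, k, hkA, this.1, not_lt.2 this.2⟩
    obtain ⟨C, hC, m, hm1, hm2⟩ := key
    refine ⟨m, hm1, ?_⟩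
    simp only [Set.mem_iUnion]
    exact ⟨C, (hGfin n).mem_toFinset.2 hC, hm2⟩
  · -- backward direction
    intro hc 𝒰 hO hcov
    classical
    have hAcov : ∀ (A : 𝒜) (n : ℕ), ∃ U, U ∈ 𝒰 n ∧ (Sum.inr A : PsiSpace 𝒜) ∈ U := by
      intro A n
      have : (Sum.inr A : PsiSpace 𝒜) ∈ ⋃₀ 𝒰 n := (hcov n).symm ▸ mem_univ _
      obtain ⟨U, hU, hx⟩ := this
      exact ⟨U, hU, hx⟩
    choose U hUmem hUx using hAcov
    have hNcov : ∀ (k n : ℕ), ∃ V, V ∈ 𝒰 n ∧ (Sum.inl k : PsiSpace 𝒜) ∈ V := by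
      intro k n
      have : (Sum.inl k : PsiSpace 𝒜) ∈ ⋃₀ 𝒰 n := (hcov n).symm ▸ mem_univ _
      obtain ⟨V, hV, hx⟩ := this
      exact ⟨V, hV, hx⟩
    choose V hVmem hVx using hNcov
    have hbd : ∀ (A : 𝒜) (n : ℕ), ∃ m : ℕ, ∀ k ∈ (A : Set ℕ),
        (Sum.inl k : PsiSpace 𝒜) ∉ U A n → k ≤ m := by
      intro A n
      have hfin : {k : ℕ | k ∈ (A : Set ℕ) ∧ (Sum.inl k : PsiSpace 𝒜) ∉ U A n}.Finite :=
        hO n (U A n) (hUmem A n) A (hUx A n)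
      obtain ⟨m, hm⟩ := hfin.bddAbove
      exact ⟨m, fun k hk hk' => hm ⟨hk, hk'⟩⟩
    choose g hg using hbd
    set f : 𝒜 → ℕ → ℕ := fun A n => g A n + 1 with hf
    have hkey : ∀ (A : 𝒜) (n k : ℕ), k ∈ (A : Set ℕ) → f A n ≤ k →
        (Sum.inl k : PsiSpace 𝒜) ∈ U A n := by
      intro A n k hk hfk
      by_contra h
      have := hg A n k hk h
      simp only [hf] at hfk
      omega
    obtain ⟨ℱ, hℱ⟩ := hc f
    set G : ℕ → Set (Set (PsiSpace 𝒜)) := fun n =>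
      (fun B => U B n) '' (ℱ n : Set 𝒜) ∪ (fun k => V k n) '' Set.Iic n with hGdef
    refine ⟨G, fun n => ⟨?_, ?_⟩, ?_⟩
    · rintro W (⟨B, _, rfl⟩ | ⟨k, _, rfl⟩)
      · exact hUmem B n
      · exact hVmem k n
    · exact ((ℱ n).finite_toSet.image _).union ((Set.finite_Iic n).image _)
    · rintro (k | A)
      · refine eventually_atTop.2 ⟨k, fun n hn => ?_⟩
        refine ⟨V k n, ⟨hVmem k n, ⟨Sum.inl k, hVx k n, ?_⟩⟩, hVx k n⟩
        exact ⟨V k n, Or.inr ⟨k, Set.mem_Iic.2 hn, rfl⟩, hVx k n⟩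
      · refine (hℱ A).mono fun n hn => ?_
        obtain ⟨m, ⟨hmA, hmU⟩⟩ := hn
        simp only [Set.mem_iUnion] at hmU
        obtain ⟨B, hB, hmB⟩ := hmU
        refine ⟨U A n, ⟨hUmem A n, ⟨Sum.inl m, ?_, ?_⟩⟩, hUx A n⟩
        · exact hkey A n m hmA.1 (not_lt.1 hmA.2)
        · exact ⟨U B n, Or.inl ⟨B, hB, rfl⟩, hkey B n m hmB.1 (not_lt.1 hmB.2)⟩
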